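/- Let V be a finite-dimensional complex vector space equipped with a non-degenerate symmetric ℂ-bilinear form C. Then there exists a Hermitian metric h on V which is compatible with C. -/

import Mathlib

noncomputable section

variable {V : Type*} [AddCommGroup V] [Module ℂ V] [FiniteDimensional ℂ V]

/-- `h` is a Hermitian metric on the complex vector space `V`:
it is additive and `ℂ`-linear in the first argument, Hermitian-symmetric
(hence conjugate-linear in the second argument), and positive definite. -/
def IsHermitianMetric (h : V → V → ℂ) : Prop :=
  (∀ u v w : V, h (u + v) w = h u w + h v w) ∧
  (∀ (a : ℂ) (u v : V), h (a • u) v = a * h u v) ∧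
  (∀ u v : V, h u v = starRingEnd ℂ (h v u)) ∧
  (∀ v : V, v ≠ 0 → 0 < (h v v).re)

/-- `C` is a non-degenerate symmetric `ℂ`-bilinear form on `V`. -/
def IsNondegSymmBilin (C : V → V → ℂ) : Prop :=
  (∀ u v w : V, C (u + v) w = C u w + C v w) ∧
  (∀ (a : ℂ) (u v : V), C (a • u) v = a * C u v) ∧
  (∀ u v : V, C u v = C v u) ∧
  (∀ v : V, (∀ u : V, C v u = 0) → v = 0)

/-- `Ψ_h : V → V^*`, `Ψ_h(u)(v) = h(v,u)`; it is conjugate-linear in `u`. -/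
def PsiH (h : V → V → ℂ) : V → V → ℂ := fun u v => h v u

/-- The dual Hermitian metric `h^∨` on `V^* `:
`h^∨(f,g) = h(Ψ_h⁻¹(g), Ψ_h⁻¹(f))`. -/
def dualMetric (h : V → V → ℂ) : (V → ℂ) → (V → ℂ) → ℂ :=
  fun f g => h (Function.invFun (PsiH h) g) (Function.invFun (PsiH h) f)

/-- `h` is compatible with the form `C` if `Ψ_C : V → V^*`, `Ψ_C(u) = C(u,·) = C u`,
is isometric with respect to `h` and `h^∨`, i.e. `h^∨(Ψ_C u, Ψ_C v) = h(u,v)`. -/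
def Compatible (h C : V → V → ℂ) : Prop :=
  ∀ u v : V, dualMetric h (C u) (C v) = h u v

/-- Any non-degenerate symmetric bilinear form `C` on a finite-dimensional complex
vector space admits a compatible Hermitian metric. -/
theorem exists_compatible_hermitianMetric
    (C : V → V → ℂ) (hC : IsNondegSymmBilin C) :
    ∃ h : V → V → ℂ, IsHermitianMetric h ∧ Compatible h C := by

  classical
  obtain ⟨hAdd, hSmul, hSymm, hNondeg⟩ := hC
  have hAdd₂ : ∀ u v w : V, C u (v + w) = C u v + C u w := fun u v w => by
    rw [hSymm, hAdd, hSymm v u, hSymm w u]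
  have hSmul₂ : ∀ (a : ℂ) (u v : V), C u (a • v) = a * C u v := fun a u v => by
    rw [hSymm, hSmul, hSymm v u]
  set B : LinearMap.BilinForm ℂ V := LinearMap.mk₂ ℂ C hAdd hSmul hAdd₂ hSmul₂ with hBdef
  have hBapp : ∀ u w : V, B u w = C u w := fun _ _ => rfl
  have hBsymm : B.IsSymm := LinearMap.BilinForm.isSymm_def.2 fun u w => hSymm u w
  obtain ⟨v, hv⟩ := LinearMap.BilinForm.exists_orthogonal_basis (LinearMap.BilinForm.isSymm_iff.1 hBsymm)
  -- diagonal entries are nonzero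
  have hd : ∀ i, B (v i) (v i) ≠ 0 := by
    intro i h0
    have hz : ∀ u : V, C (v i) u = 0 := by
      intro u
      have hrep := v.sum_repr u
      calc C (v i) u = B (v i) u := rfl
        _ = B (v i) (∑ j, v.repr u j • v j) := by rw [hrep]
        _ = ∑ j, v.repr u j * B (v i) (v j) := by
              rw [map_sum]; simp [smul_eq_mul]
        _ = 0 := by
              apply Finset.sum_eq_zero
              intro j _
              by_cases hij : i = j
              · subst hij; rw [h0, mul_zero]
              · rw [hv hij, mul_zero]
    exact v.ne_zero i (hNondeg (v i) hz)
  -- square roots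
  set s : Fin (Module.finrank ℂ V) → ℂ := fun i => (B (v i) (v i)) ^ (2⁻¹ : ℂ) with hsdef
  have hs2 : ∀ i, s i * s i = B (v i) (v i) := by
    intro i
    simpa [hsdef, sq] using Complex.cpow_ofNat_inv_pow (B (v i) (v i)) 2
  have hsne : ∀ i, s i ≠ 0 := by
    intro i h0
    exact hd i (by rw [← hs2 i, h0, mul_zero])
  set e : Module.Basis (Fin (Module.finrank ℂ V)) ℂ V :=
    v.unitsSMul (fun i => (Units.mk0 (s i) (hsne i))⁻¹) with hedef
  have heapp : ∀ i, e i = (s i)⁻¹ • v i := fun i => by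
    rw [hedef, Module.Basis.unitsSMul_apply]; rfl
  have hBe : ∀ i j, B (e i) (e j) = if i = j then 1 else 0 := by
    intro i j
    rw [heapp, heapp]
    simp only [map_smul, LinearMap.smul_apply, smul_eq_mul]
    by_cases hij : i = j
    · subst hij
      rw [if_pos rfl, ← hs2 i]
      field_simp
      exact div_self (hsne i)
    · rw [if_neg hij, hv hij, mul_zero, mul_zero]
  -- the hermitian metric
  set h : V → V → ℂ := fun u w => ∑ i, e.repr u i * (starRingEnd ℂ) (e.repr w i)
    with hhdef
  -- C in coordinates
  have hCsum : ∀ u w : V, C u w = ∑ i, e.repr u i * e.repr w i := by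
    intro u w
    have h1 : C u w = B u w := rfl
    rw [h1]
    conv_lhs => rw [← e.sum_repr u, ← e.sum_repr w]
    simp only [map_sum, LinearMap.sum_apply, map_smul, LinearMap.smul_apply, smul_eq_mul,
      hBe, mul_ite, mul_one, mul_zero, Finset.mul_sum]
    refine Finset.sum_congr rfl fun i _ => ?_
    rw [Finset.sum_ite_eq' Finset.univ i fun x => e.repr w i * e.repr u x]
    simp [mul_comm]
  -- sigma : componentwise conjugation
  set σ : V → V := fun u => ∑ i, (starRingEnd ℂ) (e.repr u i) • e i with hσdef
  have hσrepr : ∀ u j, e.repr (σ u) j = (starRingEnd ℂ) (e.repr u j) := by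
    intro u j
    rw [hσdef]
    exact congrFun (e.repr_sum_self fun i => (starRingEnd ℂ) (e.repr u i)) j
  -- PsiH h (σ u) = C u
  have hPsi : ∀ u : V, PsiH h (σ u) = C u := by
    intro u
    funext x
    show h x (σ u) = C u x
    rw [hhdef, hCsum]
    refine Finset.sum_congr rfl fun i _ => ?_
    rw [hσrepr]
    simp [mul_comm]
  -- injectivity of PsiH h
  have hinj : Function.Injective (PsiH h) := by
    intro a b hab
    have key : ∀ j, e.repr a j = e.repr b j := by
      intro j
      have hx := congrFun hab (e j)
      simp only [PsiH, hhdef] at hx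
      have hsimp : ∀ w : V, ∑ i, e.repr (e j) i * (starRingEnd ℂ) (e.repr w i)
          = (starRingEnd ℂ) (e.repr w j) := by
        intro w
        rw [Finset.sum_eq_single j]
        · simp
        · intro i _ hij
          simp [e.repr_self, Finsupp.single_apply, Ne.symm hij]
        · intro habs; exact absurd (Finset.mem_univ j) habs
      rw [hsimp a, hsimp b] at hx
      exact (starRingEnd ℂ).injective hx
    apply e.repr.injective
    ext j
    exact key j
  have hinv : ∀ u : V, Function.invFun (PsiH h) (C u) = σ u := by
    intro u
    rw [← hPsi u]
    exact Function.leftInverse_invFun hinj (σ u)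
  refine ⟨h, ⟨?_, ?_, ?_, ?_⟩, ?_⟩
  · intro u w x
    simp [hhdef, map_add, add_mul, Finset.sum_add_distrib]
  · intro a u w
    simp [hhdef, map_smul, Finset.mul_sum, mul_assoc]
  · intro u w
    rw [hhdef]
    simp only [map_sum, map_mul, RingHomCompTriple.comp_apply, RingHom.id_apply,
      Complex.conj_conj]
    exact Finset.sum_congr rfl fun i _ => mul_comm _ _
  · intro u hu
    have hre : (h u u).re = ∑ i, Complex.normSq (e.repr u i) := by
      rw [hhdef]
      simp only [Complex.mul_conj]
      rw [← Complex.ofReal_sum]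
      simp
    rw [hre]
    obtain ⟨j, hj⟩ : ∃ j, e.repr u j ≠ 0 := by
      by_contra hall
      push_neg at hall
      apply hu
      apply e.repr.injective
      ext j
      simp [hall j]
    refine Finset.sum_pos' (fun i _ => Complex.normSq_nonneg _) ⟨j, Finset.mem_univ j, ?_⟩
    exact Complex.normSq_pos.mpr hj
  · intro u w
    show h (Function.invFun (PsiH h) (C w)) (Function.invFun (PsiH h) (C u)) = h u w
    rw [hinv, hinv, hhdef]
    refine Finset.sum_congr rfl fun i _ => ?_
    rw [hσrepr, hσrepr]
    simp [mul_comm]
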